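/- (Correctness of the Find_Ordinal program.) Let P = {(0,0,0,1,0), (0,1,1,1,1), (1,0,0,0,2), (1,1,1,0,2)}. For every ordinal α, the ordinal computation by P with input the characteristic function χ_{{α}} (the tape T₀ with T₀(ξ) = 1 iff ξ = α) halts, i.e., has successor length θ = β+1; moreover the final head position is H(β) = α, the final state is S(β) = 2, and the final tape content equals χ_{{α}}. -/

import Mathlib

attribute [local instance] Classical.propDecidable

namespace OTM

universe u

/-- A command is a 5-tuple `(s, c, c', m, s')` with `s, s' ∈ ℕ` and
`c, c', m ∈ {0,1}` (encoded as `Bool`, with `0 = false`, `1 = true`). -/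
abbrev Command : Type := ℕ × Bool × Bool × Bool × ℕ

/-- A program is a finite set of commands reacting to both possible read
symbols in every occurring state, and doing so deterministically. -/
structure Program where
  cmds : Finset Command
  total : ∀ C ∈ cmds, ∃ D ∈ cmds, D.1 = C.1 ∧ D.2.1 ≠ C.2.1
  deterministic : ∀ C ∈ cmds, ∀ D ∈ cmds, C.1 = D.1 → C.2.1 = D.2.1 → C = D

/-- The set of program states. -/
def Program.states (P : Program) : Set ℕ := {s | ∃ C ∈ P.cmds, C.1 = s}

/-- `t` is in the domain of a computation of length `len`, where `len = none`
codes length `Ord` (the computation never stops) and `len = some θ` codes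
length `θ`. -/
def inDom (len : Option Ordinal.{u}) (t : Ordinal.{u}) : Prop := ∀ θ ∈ len, t < θ

/-- The inferior limit of a `ℕ`-valued function along the ordinals approaching
`t`: the least value attained cofinally often below `t`. -/
noncomputable def natLiminf (t : Ordinal.{u}) (f : Ordinal.{u} → ℕ) : ℕ :=
  sInf {n | ∀ s < t, ∃ r, s ≤ r ∧ r < t ∧ f r = n}

/-- The inferior limit of an ordinal-valued function `f` restricted to the
index set `A`, along the ordinals approaching `t`: the supremum over (nonempty)
tails of the infima of `f` on the tails. -/
noncomputable def ordLiminf (t : Ordinal.{u}) (A : Set Ordinal.{u}) (f : Ordinal.{u} → Ordinal.{u}) : Ordinal.{u} :=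
  sSup {β | ∃ s, s < t ∧ (∃ r, r ∈ A ∧ s ≤ r ∧ r < t) ∧
      ∀ r, r ∈ A → s ≤ r → r < t → β ≤ f r}

/-- `(len, S, H, T)` is an ordinal computation by the program `P`:
`S` is the sequence of machine states, `H` the sequence of head positions and
`T` the sequence of tape contents (only their values at ordinals in the domain
given by `len` are relevant). -/
structure IsComputation (P : Program) (len : Option Ordinal.{u})
    (S : Ordinal.{u} → ℕ) (H : Ordinal.{u} → Ordinal.{u}) (T : Ordinal.{u} → Ordinal.{u} → Bool) : Prop where
  /-- the length, if an ordinal, is a successor ordinal -/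
  len_succ : ∀ θ ∈ len, ∃ β : Ordinal.{u}, θ = β + 1
  /-- the machine starts in state `0` -/
  init_S : S 0 = 0
  /-- the machine starts with head position `0` -/
  init_H : H 0 = 0
  /-- the machine stops if the machine state is not a program state -/
  halt : ∀ t, inDom len t → S t ∉ P.states → len = some (t + 1)
  /-- execution of the unique applicable command -/
  step : ∀ t, inDom len t → S t ∈ P.states → inDom len (t + 1) ∧
      ∀ C ∈ P.cmds, C.1 = S t → C.2.1 = T t (H t) →
        (∀ ξ, T (t + 1) ξ = if ξ = H t then C.2.2.1 else T t ξ) ∧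
        S (t + 1) = C.2.2.2.2 ∧
        H (t + 1) = (if C.2.2.2.1 = true then H t + 1
            else if ∃ γ, H t = γ + 1 then Ordinal.pred (H t) else 0)
  /-- at limit times the constellation is determined by inferior limits -/
  limit : ∀ t, inDom len t → Order.IsSuccLimit t →
      (∀ ξ, (T t ξ = true ↔ ∃ s < t, ∀ r, s ≤ r → r < t → T r ξ = true)) ∧
      S t = natLiminf t S ∧
      H t = ordLiminf t {s | S s = S t} H

/-- `P : T₀ ↦ T₁` : the ordinal computation by `P` with input `T₀` stops with
final tape content `T₁`. -/
def Computes (P : Program) (T₀ T₁ : Ordinal.{u} → Bool) : Prop :=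
  ∃ (β : Ordinal.{u}) (S : Ordinal.{u} → ℕ) (H : Ordinal.{u} → Ordinal.{u}) (T : Ordinal.{u} → Ordinal.{u} → Bool),
    IsComputation P (some (β + 1)) S H T ∧ T 0 = T₀ ∧ T β = T₁

/-- The characteristic function of a set of ordinals. -/
noncomputable def chi (z : Set Ordinal.{u}) : Ordinal.{u} → Bool :=
  fun ξ => if ξ ∈ z then true else false

/-- `x` is ordinal computable from a finite set of ordinal parameters. -/
def ComputableFromFinitelyManyParams (x : Set Ordinal.{u}) : Prop :=
  ∃ (z : Finset Ordinal.{u}) (P : Program), Computes P (chi ↑z) (chi x)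

end OTM

namespace OTM

/-- The `Find_Ordinal` program
`P = {(0,0,0,1,0), (0,1,1,1,1), (1,0,0,0,2), (1,1,1,0,2)}`
(bits `0`/`1` are encoded as `false`/`true`). -/
def findOrdinalProgram : Program where
  cmds := {(0, false, false, true, 0), (0, true, true, true, 1),
           (1, false, false, false, 2), (1, true, true, false, 2)}
  total := by decide
  deterministic := by decide

end OTM

namespace OTM

lemma mem_findOrdinal_states (s : ℕ) :
    s ∈ findOrdinalProgram.states ↔ s = 0 ∨ s = 1 := by
  constructor
  · rintro ⟨C, hC, rfl⟩
    fin_cases hC <;> simp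
  · rintro (rfl | rfl)
    · exact ⟨(0, false, false, true, 0), by decide, rfl⟩
    · exact ⟨(1, false, false, false, 2), by decide, rfl⟩

lemma chi_singleton (α ξ : Ordinal.{u}) :
    chi {α} ξ = if ξ = α then true else false := by
  simp [chi]

lemma sSup_Iio_of_isLimit {t : Ordinal.{u}} (ht : Order.IsSuccLimit t) :
    sSup (Set.Iio t) = t := by
  refine IsLUB.csSup_eq ⟨fun b hb => hb.le, fun b hb => ?_⟩ ⟨0, ht.pos⟩
  by_contra h
  push_neg at h
  have h1 : b + 1 < t := by
    rw [Ordinal.add_one_eq_succ]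
    exact ht.succ_lt h
  have := hb h1
  rw [Ordinal.add_one_eq_succ] at this
  exact (Order.lt_succ b).not_ge this

lemma limit_le {α t : Ordinal.{u}} (ht : Order.IsSuccLimit t) (h : t < α + 2 + 1) :
    t ≤ α := by
  by_contra hc
  push_neg at hc
  have h1 : α + 1 < t := by
    rw [Ordinal.add_one_eq_succ]; exact ht.succ_lt hc
  have h2 : α + 2 < t := by
    have e : α + 2 = α + 1 + 1 := by rw [add_assoc]; norm_num
    rw [e, Ordinal.add_one_eq_succ]; exact ht.succ_lt h1
  rw [Ordinal.add_one_eq_succ, Order.lt_succ_iff] at h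
  exact h2.not_ge h

lemma ordLiminf_eq_self {t : Ordinal.{u}} (ht : Order.IsSuccLimit t) {A : Set Ordinal.{u}}
    {f : Ordinal.{u} → Ordinal.{u}} (hA : ∀ r < t, r ∈ A) (hf : ∀ r < t, f r = r) :
    ordLiminf t A f = t := by
  unfold ordLiminf
  have hset : {β | ∃ s, s < t ∧ (∃ r, r ∈ A ∧ s ≤ r ∧ r < t) ∧
      ∀ r, r ∈ A → s ≤ r → r < t → β ≤ f r} = Set.Iio t := by
    ext β
    constructor
    · rintro ⟨s, hst, -, hall⟩
      have := hall s (hA s hst) le_rfl hst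
      rw [hf s hst] at this
      exact lt_of_le_of_lt this hst
    · intro hβ
      exact ⟨β, hβ, ⟨β, hA β hβ, le_rfl, hβ⟩,
        fun r _ hβr hrt => by rw [hf r hrt]; exact hβr⟩
  rw [hset]
  exact sSup_Iio_of_isLimit ht

end OTM

open OTM in
/-- Correctness of the `Find_Ordinal` program: for every ordinal `α`, the
ordinal computation by it with input `χ_{{α}}` halts, with final head position
`α`, final state `2` and final tape content `χ_{{α}}`. -/
theorem findOrdinalProgram_correct (α : Ordinal.{u}) :
    ∃ (β : Ordinal.{u}) (S : Ordinal.{u} → ℕ) (H : Ordinal.{u} → Ordinal.{u})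
      (T : Ordinal.{u} → Ordinal.{u} → Bool),
      IsComputation findOrdinalProgram (some (β + 1)) S H T ∧
      T 0 = chi {α} ∧ H β = α ∧ S β = 2 ∧ T β = chi {α} := by
  have h008 : (α : Ordinal.{u}) + 2 = α + 1 + 1 := by rw [add_assoc]; norm_num
  have hne1 : ¬ (α + 1 ≤ α) := by
    rw [Ordinal.add_one_eq_succ, Order.succ_le_iff]; exact lt_irrefl α
  have hle1 : (α : Ordinal.{u}) ≤ α + 1 := by
    rw [Ordinal.add_one_eq_succ]; exact Order.le_succ α
  have hne2 : ¬ (α + 2 ≤ α + 1) := by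
    rw [h008, Ordinal.add_one_eq_succ (α + 1), Order.succ_le_iff]; exact lt_irrefl _
  have hne2' : ¬ (α + 2 ≤ α) := fun h => hne1 (le_trans (by
    rw [h008, Ordinal.add_one_eq_succ (α + 1)]; exact (Order.le_succ _)) h)
  have hne2'' : α + 2 ≠ α + 1 := fun h => hne2 (le_of_eq h)
  have hs1α : α + 1 ≠ α := fun h => hne1 (le_of_eq h)
  refine ⟨α + 2,
    (fun t => if t ≤ α then 0 else if t = α + 1 then 1 else 2),
    (fun t => if t ≤ α + 1 then t else α),
    (fun _ => chi {α}), ?_, rfl, ?_, ?_, rfl⟩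
  · constructor
    · -- len_succ
      rintro θ hθ
      exact ⟨α + 2, (Option.mem_some_iff.mp hθ).symm⟩
    · -- init_S
      rw [if_pos (zero_le (a := α))]
    · -- init_H
      rw [if_pos (zero_le (a := α + 1))]
    · -- halt
      intro t ht hns
      rw [mem_findOrdinal_states] at hns
      push_neg at hns
      have h1 : ¬ (t ≤ α) := fun h => hns.1 (by rw [if_pos h])
      have h2 : t ≠ α + 1 := fun h => hns.2 (by rw [if_neg h1, if_pos h])
      push_neg at h1
      have h3 : α + 2 ≤ t := by
        rw [h008, Ordinal.add_one_eq_succ (α + 1), Order.succ_le_iff]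
        rcases lt_or_eq_of_le (by rw [Ordinal.add_one_eq_succ, Order.succ_le_iff]; exact h1 :
          α + 1 ≤ t) with h | h
        · exact h
        · exact absurd h.symm h2
      have h4 : t ≤ α + 2 := by
        have := ht (α + 2 + 1) rfl
        rwa [Ordinal.add_one_eq_succ, Order.lt_succ_iff] at this
      rw [le_antisymm h4 h3]
    · -- step
      intro t ht hst
      rw [mem_findOrdinal_states] at hst
      have htle : t ≤ α + 1 := by
        by_contra hc
        push_neg at hc
        have h1 : ¬ t ≤ α := fun h => hc.not_ge (h.trans hle1)
        have h2 : t ≠ α + 1 := ne_of_gt hc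
        rw [if_neg h1, if_neg h2] at hst
        rcases hst with h | h <;> exact absurd h (by norm_num)
      have hdom : inDom (some (α + 2 + 1)) (t + 1) := by
        intro θ hθ
        rw [Option.mem_some_iff] at hθ
        subst hθ
        rw [Ordinal.add_one_eq_succ t, Ordinal.add_one_eq_succ (α + 2),
          Order.lt_succ_iff, h008, Ordinal.add_one_eq_succ (α + 1),
          Order.succ_le_iff, Order.lt_succ_iff]
        exact htle
      refine ⟨hdom, ?_⟩
      intro C hC
      rcases lt_or_eq_of_le htle with htlt | hteq
      · rw [Ordinal.add_one_eq_succ, Order.lt_succ_iff] at htlt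
        -- t ≤ α : state 0, head t
        have hS : (if t ≤ α then (0 : ℕ) else if t = α + 1 then 1 else 2) = 0 := by
          rw [if_pos htlt]
        have hH : (if t ≤ α + 1 then t else α) = t := by rw [if_pos htle]
        rcases lt_or_eq_of_le htlt with htlt' | hteq'
        · -- t < α : reads false
          have hread : chi {α} (if t ≤ α + 1 then t else α) = false := by
            rw [hH, chi_singleton, if_neg (ne_of_lt htlt')]
          have hta1 : t + 1 ≤ α := by
            rw [Ordinal.add_one_eq_succ, Order.succ_le_iff]; exact htlt'
          have h3 : t + 1 ≤ α + 1 := hta1.trans hle1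
          fin_cases hC
          · -- (0, false, false, true, 0) : the applicable command
            refine fun _ _ => ⟨fun ξ => ?_, ?_, ?_⟩
            · rcases eq_or_ne ξ t with rfl | hξ
              · rw [hH, if_pos rfl, chi_singleton, if_neg (ne_of_lt htlt')]
              · rw [hH, if_neg hξ]
            · rw [if_pos hta1]
            · rw [hH, if_pos h3,
                if_pos (show ((0, false, false, true, 0) : Command).2.2.2.1 = true from rfl)]
          · intro _ h2; rw [hread] at h2; exact absurd h2 (by decide)
          · intro h1 _; rw [hS] at h1; exact absurd h1 (by decide)
          · intro h1 _; rw [hS] at h1; exact absurd h1 (by decide)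
        · -- t = α : reads true
          have hread : chi {α} (if t ≤ α + 1 then t else α) = true := by
            rw [hH, chi_singleton, if_pos hteq']
          fin_cases hC
          · intro _ h2; rw [hread] at h2; exact absurd h2 (by decide)
          · -- (0, true, true, true, 1) : the applicable command
            refine fun _ _ => ⟨fun ξ => ?_, ?_, ?_⟩
            · rcases eq_or_ne ξ t with rfl | hξ
              · rw [hH, if_pos rfl, chi_singleton, if_pos hteq']
              · rw [hH, if_neg hξ]
            · rw [hteq', if_neg hne1, if_pos rfl]
            · have h3 : t + 1 ≤ α + 1 := by rw [hteq']
              rw [hH, if_pos h3,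
                if_pos (show ((0, true, true, true, 1) : Command).2.2.2.1 = true from rfl)]
          · intro h1 _; rw [hS] at h1; exact absurd h1 (by decide)
          · intro h1 _; rw [hS] at h1; exact absurd h1 (by decide)
      · -- t = α + 1 : state 1, head α + 1, reads false
        subst hteq
        have hS : (if α + 1 ≤ α then (0 : ℕ) else if α + 1 = α + 1 then 1 else 2) = 1 := by
          rw [if_neg hne1, if_pos rfl]
        have hread : chi {α} (if α + 1 ≤ α + 1 then α + 1 else α) = false := by
          rw [if_pos le_rfl, chi_singleton, if_neg hs1α]
        have a1 : ¬ (α + 1 + 1 ≤ α) := by rw [← h008]; exact hne2'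
        have a2 : α + 1 + 1 ≠ α + 1 := by rw [← h008]; exact hne2''
        have a3 : ¬ (α + 1 + 1 ≤ α + 1) := by rw [← h008]; exact hne2
        fin_cases hC
        · intro h1 _; rw [hS] at h1; exact absurd h1 (by decide)
        · intro h1 _; rw [hS] at h1; exact absurd h1 (by decide)
        · -- (1, false, false, false, 2) : the applicable command
          refine fun _ _ => ⟨fun ξ => ?_, ?_, ?_⟩
          · rcases eq_or_ne ξ (α + 1) with rfl | hξ
            · rw [if_pos le_rfl, if_pos rfl, chi_singleton, if_neg hs1α]
            · rw [if_pos le_rfl, if_neg hξ]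
          · rw [if_neg a1, if_neg a2]
          · rw [if_neg a3, if_pos le_rfl,
              if_neg (show ¬ ((1, false, false, false, 2) : Command).2.2.2.1 = true
                from by decide),
              if_pos (show ∃ γ, α + 1 = γ + 1 from ⟨α, rfl⟩),
              Ordinal.add_one_eq_succ, Ordinal.pred_succ]
        · intro _ h2; rw [hread] at h2; exact absurd h2 (by decide)
    · -- limit
      intro t ht hlim
      have htα : t ≤ α := limit_le hlim (ht (α + 2 + 1) rfl)
      have hSt : (if t ≤ α then (0 : ℕ) else if t = α + 1 then 1 else 2) = 0 := by
        rw [if_pos htα]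
      refine ⟨fun ξ => ?_, ?_, ?_⟩
      · constructor
        · intro h
          exact ⟨0, hlim.pos, fun r _ _ => h⟩
        · rintro ⟨s, hs, h⟩
          exact h s le_rfl hs
      · rw [hSt, natLiminf]
        refine (Nat.sInf_eq_zero.mpr (Or.inl ?_)).symm
        intro s hs
        exact ⟨s, le_rfl, hs, by rw [if_pos (le_of_lt (lt_of_lt_of_le hs htα))]⟩
      · have hHt : (if t ≤ α + 1 then t else α) = t := by
          rw [if_pos (htα.trans hle1)]
        have key := ordLiminf_eq_self hlim
          (A := {s | (if s ≤ α then (0 : ℕ) else if s = α + 1 then 1 else 2)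
              = (if t ≤ α then (0 : ℕ) else if t = α + 1 then 1 else 2)})
          (f := fun r => if r ≤ α + 1 then r else α)
          (fun r hr => by
            have hrα : r ≤ α := le_of_lt (lt_of_lt_of_le hr htα)
            show (if r ≤ α then (0 : ℕ) else _) = (if t ≤ α then (0 : ℕ) else _)
            rw [if_pos hrα, if_pos htα])
          (fun r hr => by
            have hrle : r ≤ α + 1 := (le_of_lt (lt_of_lt_of_le hr htα)).trans hle1
            show (if r ≤ α + 1 then r else α) = r
            rw [if_pos hrle])
        exact hHt.trans key.symm
  · -- H β = α
    show (if α + 2 ≤ α + 1 then α + 2 else α) = α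
    rw [if_neg hne2]
  · -- S β = 2
    show (if α + 2 ≤ α then (0 : ℕ) else if α + 2 = α + 1 then 1 else 2) = 2
    rw [if_neg hne2', if_neg hne2'']
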